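/- Let F⁺, F⁻ : ℝ² → ℝ² be continuous vector fields and let φ⁺, φ⁻ : ℝ × ℝ² → ℝ² be continuously differentiable maps satisfying the flow laws φ^σ(0, x) = x and ∂_t φ^σ(t, x) = F^σ(φ^σ(t, x)) for σ ∈ {+, −}. Let x₀ ∈ ℝ² be a point at which F⁺(x₀) and F⁻(x₀) are linearly independent. Then there exist d₁ > 0 and e₁ > 0 such that the map (t₁, t₂) ↦ φ⁺(t₂, φ⁻(t₁, x₀)) is injective on (0, d₁) × (0, e₁) and its image {φ⁺(t₂, φ⁻(t₁, x₀)) : 0 < t₁ < d₁, 0 < t₂ < e₁} is a nonempty open subset of ℝ². -/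

import Mathlib

/-- inverse-function-theorem step: if the two planar vector
fields are linearly independent at `x₀`, then the alternating flow map
`(t₁, t₂) ↦ φ⁺(t₂, φ⁻(t₁, x₀))` is injective on a small open rectangle
`(0, d₁) × (0, e₁)` and its image is a nonempty open subset of the plane. -/
theorem alternating_flow_map_open_image
    (Fp Fm : ℝ × ℝ → ℝ × ℝ) (hFp : Continuous Fp) (hFm : Continuous Fm)
    (φp φm : ℝ → (ℝ × ℝ) → (ℝ × ℝ))
    (hφp : ContDiff ℝ 1 (fun q : ℝ × (ℝ × ℝ) => φp q.1 q.2))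
    (hφm : ContDiff ℝ 1 (fun q : ℝ × (ℝ × ℝ) => φm q.1 q.2))
    (hφp0 : ∀ x, φp 0 x = x) (hφm0 : ∀ x, φm 0 x = x)
    (hφpflow : ∀ (t : ℝ) (x : ℝ × ℝ), HasDerivAt (fun u : ℝ => φp u x) (Fp (φp t x)) t)
    (hφmflow : ∀ (t : ℝ) (x : ℝ × ℝ), HasDerivAt (fun u : ℝ => φm u x) (Fm (φm t x)) t)
    (x₀ : ℝ × ℝ) (hindep : LinearIndependent ℝ ![Fp x₀, Fm x₀]) :
    ∃ d₁ : ℝ, 0 < d₁ ∧ ∃ e₁ : ℝ, 0 < e₁ ∧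
      Set.InjOn (fun p : ℝ × ℝ => φp p.2 (φm p.1 x₀)) (Set.Ioo 0 d₁ ×ˢ Set.Ioo 0 e₁) ∧
      IsOpen ((fun p : ℝ × ℝ => φp p.2 (φm p.1 x₀)) '' (Set.Ioo 0 d₁ ×ˢ Set.Ioo 0 e₁)) ∧
      ((fun p : ℝ × ℝ => φp p.2 (φm p.1 x₀)) '' (Set.Ioo 0 d₁ ×ˢ Set.Ioo 0 e₁)).Nonempty := by
  set G : ℝ × ℝ → ℝ × ℝ := fun p => φp p.2 (φm p.1 x₀) with hGdef
  -- G is C¹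
  have hGc : ContDiff ℝ 1 G := by
    have h1 : ContDiff ℝ 1 (fun p : ℝ × ℝ => φm p.1 x₀) :=
      hφm.comp (contDiff_fst.prodMk contDiff_const)
    exact hφp.comp (contDiff_snd.prodMk h1)
  have hGd : HasStrictFDerivAt G (fderiv ℝ G 0) 0 :=
    (hGc.contDiffAt).hasStrictFDerivAt one_ne_zero
  set L : (ℝ × ℝ) →L[ℝ] (ℝ × ℝ) := fderiv ℝ G 0 with hLdef
  have hF : HasFDerivAt G L 0 := hGd.hasFDerivAt
  -- directional derivatives
  have hL1 : L (1, 0) = Fm x₀ := by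
    have hline : HasDerivAt (fun s : ℝ => ((s, 0) : ℝ × ℝ)) ((1 : ℝ), (0 : ℝ)) 0 :=
      HasDerivAt.prodMk (hasDerivAt_id (0 : ℝ)) (hasDerivAt_const (0 : ℝ) (0 : ℝ))
    have h1 : HasDerivAt (fun s : ℝ => G (s, 0)) (L (1, 0)) 0 :=
      HasFDerivAt.comp_hasDerivAt (l := G) 0 hF hline
    have h2 : HasDerivAt (fun s : ℝ => G (s, 0)) (Fm x₀) 0 := by
      have : (fun s : ℝ => G (s, 0)) = fun s : ℝ => φm s x₀ := by
        funext s; simp [hGdef, hφp0]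
      rw [this]
      have := hφmflow 0 x₀
      rwa [hφm0] at this
    exact h1.unique h2
  have hL2 : L (0, 1) = Fp x₀ := by
    have hline : HasDerivAt (fun s : ℝ => ((0, s) : ℝ × ℝ)) ((0 : ℝ), (1 : ℝ)) 0 :=
      HasDerivAt.prodMk (hasDerivAt_const (0 : ℝ) (0 : ℝ)) (hasDerivAt_id (0 : ℝ))
    have h1 : HasDerivAt (fun s : ℝ => G (0, s)) (L (0, 1)) 0 :=
      HasFDerivAt.comp_hasDerivAt (l := G) 0 hF hline
    have h2 : HasDerivAt (fun s : ℝ => G (0, s)) (Fp x₀) 0 := by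
      have : (fun s : ℝ => G (0, s)) = fun s : ℝ => φp s x₀ := by
        funext s; simp [hGdef, hφm0]
      rw [this]
      have := hφpflow 0 x₀
      rwa [hφp0] at this
    exact h1.unique h2
  -- L is injective
  have hLu : ∀ u : ℝ × ℝ, L u = u.2 • Fp x₀ + u.1 • Fm x₀ := by
    intro u
    have h : (u.2 • ((0, 1) : ℝ × ℝ) + u.1 • ((1, 0) : ℝ × ℝ)) = u := by
      ext <;> simp
    calc L u = L (u.2 • ((0, 1) : ℝ × ℝ) + u.1 • ((1, 0) : ℝ × ℝ)) := by rw [h]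
      _ = u.2 • Fp x₀ + u.1 • Fm x₀ := by
          rw [map_add, map_smul, map_smul, hL1, hL2]
  have hinj : Function.Injective L := by
    have hpair := LinearIndependent.pair_iff.1 hindep
    intro u v huv
    have h0 : L (u - v) = 0 := by rw [map_sub, huv, sub_self]
    rw [hLu] at h0
    have := hpair (u - v).2 (u - v).1 h0
    have h1 : u.1 = v.1 := by have := this.2; simpa [sub_eq_zero] using this
    have h2 : u.2 = v.2 := by have := this.1; simpa [sub_eq_zero] using this
    exact Prod.ext h1 h2
  -- upgrade to a continuous linear equiv
  let e : (ℝ × ℝ) ≃L[ℝ] (ℝ × ℝ) :=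
    (LinearEquiv.ofInjectiveEndo (L : (ℝ × ℝ) →ₗ[ℝ] (ℝ × ℝ)) hinj).toContinuousLinearEquiv
  have hecoe : (e : (ℝ × ℝ) →L[ℝ] (ℝ × ℝ)) = L :=
    ContinuousLinearMap.ext fun u => by
      show e u = L u
      simp [e, LinearEquiv.coe_ofInjectiveEndo]
  have hGe : HasStrictFDerivAt G (e : (ℝ × ℝ) →L[ℝ] (ℝ × ℝ)) 0 := by
    rw [hecoe]; exact hGd
  -- inverse function theorem
  set PH := hGe.toOpenPartialHomeomorph G with hPH
  have hmem : (0 : ℝ × ℝ) ∈ PH.source := hGe.mem_toOpenPartialHomeomorph_source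
  obtain ⟨r, hr, hball⟩ := Metric.isOpen_iff.1 PH.open_source 0 hmem
  have hsub : Set.Ioo (0 : ℝ) r ×ˢ Set.Ioo (0 : ℝ) r ⊆ Metric.ball 0 r := by
    rintro ⟨a, b⟩ ⟨⟨ha0, har⟩, ⟨hb0, hbr⟩⟩
    rw [Metric.mem_ball, dist_zero_right, Prod.norm_def]
    simp only [Real.norm_eq_abs]
    rw [abs_of_pos ha0, abs_of_pos hb0]
    exact max_lt har hbr
  have hsub' : Set.Ioo (0 : ℝ) r ×ˢ Set.Ioo (0 : ℝ) r ⊆ PH.source :=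
    fun p hp => hball (hsub hp)
  have hPHcoe : (PH : ℝ × ℝ → ℝ × ℝ) = G := hGe.toOpenPartialHomeomorph_coe
  refine ⟨r, hr, r, hr, ?_, ?_, ?_⟩
  · have := PH.injOn.mono hsub'
    rwa [hPHcoe] at this
  · have := PH.isOpen_image_of_subset_source (isOpen_Ioo.prod isOpen_Ioo) hsub'
    rwa [hPHcoe] at this
  · exact ⟨G (r / 2, r / 2), ⟨(r / 2, r / 2), ⟨⟨by linarith, by linarith⟩,
      ⟨by linarith, by linarith⟩⟩, rfl⟩⟩
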